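/- A connected Hausdorff topological n-manifold that supports a minimal flow is metrizable. Equivalently, a non-metrizable connected Hausdorff manifold never supports a minimal flow: if φ : ℝ × M → M is a flow on a connected Hausdorff manifold M such that every orbit is dense, then M is metrizable. -/

import Mathlib

open Topology Metric

/-- A topological `n`-manifold: every point has an open neighbourhood homeomorphic
to `ℝⁿ`. No metrizability or second countability is assumed. -/
def IsManifoldOfDim (n : ℕ) (M : Type*) [TopologicalSpace M] : Prop :=
  ∀ x : M, ∃ U : Set M, IsOpen U ∧ x ∈ U ∧ Nonempty (U ≃ₜ EuclideanSpace ℝ (Fin n))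

/-- A connected Hausdorff topological `n`-manifold supporting a minimal flow (a flow
all of whose orbits are dense) is metrizable. -/
theorem metrizable_of_minimal_flow (n : ℕ) (M : Type*) [TopologicalSpace M]
    [T2Space M] [ConnectedSpace M] (hM : IsManifoldOfDim n M)
    (φ : ℝ × M → M) (hφ : Continuous φ)
    (hzero : ∀ x : M, φ (0, x) = x)
    (hadd : ∀ (s t : ℝ) (x : M), φ (s, φ (t, x)) = φ (s + t, x))
    (hmin : ∀ x : M, Dense (Set.range fun t : ℝ => φ (t, x))) :
    TopologicalSpace.MetrizableSpace M := by
  -- The time-`t` maps are homeomorphisms of `M`.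
  let F : ℝ → M ≃ₜ M := fun t =>
    { toFun := fun y => φ (t, y)
      invFun := fun y => φ (-t, y)
      left_inv := fun y => by simp only []; rw [hadd, neg_add_cancel, hzero]
      right_inv := fun y => by simp only []; rw [hadd, add_neg_cancel, hzero]
      continuous_toFun := hφ.comp (continuous_const.prodMk continuous_id)
      continuous_invFun := hφ.comp (continuous_const.prodMk continuous_id) }
  -- `M` is weakly locally compact, using the charts.
  have wlc : WeaklyLocallyCompactSpace M := by
    constructor
    intro x
    obtain ⟨U, hUo, hxU, ⟨e⟩⟩ := hM x
    refine ⟨Subtype.val '' (e.symm '' closedBall (e ⟨x, hxU⟩) 1), ?_, ?_⟩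
    · exact (((isCompact_closedBall _ _).image e.symm.continuous).image
        continuous_subtype_val)
    · have hop : IsOpen (Subtype.val '' (e.symm '' ball (e ⟨x, hxU⟩) 1) : Set M) := by
        apply hUo.isOpenMap_subtype_val
        rw [show (Set.image e.symm = Set.preimage e) from e.image_symm]
        exact isOpen_ball.preimage e.continuous
      refine Filter.mem_of_superset (hop.mem_nhds ?_) ?_
      · exact ⟨e.symm (e ⟨x, hxU⟩), ⟨e ⟨x, hxU⟩, mem_ball_self one_pos, rfl⟩, by simp⟩
      · exact Set.image_mono (Set.image_mono ball_subset_closedBall)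
  -- Fix a chart around some point.
  obtain ⟨x₀⟩ : Nonempty M := inferInstance
  obtain ⟨U, hUo, hx₀U, ⟨e⟩⟩ := hM x₀
  -- `M` is covered by countably many open sets homeomorphic to `ℝⁿ`.
  have : SecondCountableTopology U := e.isEmbedding.secondCountableTopology
  have hsc : ∀ q : ℚ, SecondCountableTopology ((F (q : ℝ)) '' U : Set M) := fun q =>
    ((F (q : ℝ)).image U).symm.isEmbedding.secondCountableTopology
  have hcover : ⋃ q : ℚ, ((F (q : ℝ)) '' U : Set M) = Set.univ := by
    ext y
    simp only [Set.mem_iUnion, Set.mem_univ, iff_true]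
    -- the orbit of `y` meets the open set `U`
    obtain ⟨_, hzU, t, rfl⟩ : (U ∩ Set.range fun t : ℝ => φ (t, y)).Nonempty :=
      (hmin y).inter_open_nonempty U hUo ⟨x₀, hx₀U⟩
    -- by continuity, a rational time also sends the orbit into `U`
    have hopen : IsOpen {s : ℝ | φ (s, y) ∈ U} :=
      hUo.preimage (hφ.comp (continuous_id.prodMk continuous_const))
    obtain ⟨_, hqU, q, rfl⟩ :
        ({s : ℝ | φ (s, y) ∈ U} ∩ Set.range ((↑) : ℚ → ℝ)).Nonempty :=
      Rat.denseRange_cast.inter_open_nonempty _ hopen ⟨t, hzU⟩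
    refine ⟨-q, ⟨φ ((q : ℝ), y), hqU, ?_⟩⟩
    show φ (((-q : ℚ) : ℝ), φ ((q : ℝ), y)) = y
    push_cast
    rw [hadd, neg_add_cancel, hzero]
  haveI : SecondCountableTopology M :=
    TopologicalSpace.secondCountableTopology_of_countable_cover
      (fun q : ℚ => (F (q : ℝ)).isOpen_image.mpr hUo) hcover
  haveI := wlc
  infer_instance
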